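/- Let a₀ ∈ ℝ, τ₁ > 0, and define s* = -a₀ - 1/τ₁ and a₁ = -e^{-1-τ₁a₀}/τ₁. Then s* is a root of multiplicity at least 2 of the quasipolynomial Δ(s) = s + a₀ - a₁·e^{-sτ₁}, i.e., Δ(s*) = 0 and Δ'(s*) = 0. -/

import Mathlib

open Complex

theorem stmt_1 (a₀ τ₁ : ℝ) (hτ₁ : 0 < τ₁)
    (a₁ : ℝ) (ha₁ : a₁ = -Real.exp (-1 - τ₁ * a₀) / τ₁)
    (sstar : ℂ) (hs : sstar = ((-a₀ - 1 / τ₁ : ℝ) : ℂ))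
    (Δ : ℂ → ℂ)
    (hΔ : ∀ s, Δ s = s + (a₀ : ℂ) - (a₁ : ℂ) * Complex.exp (-s * (τ₁ : ℂ))) :
    Δ sstar = 0 ∧ deriv Δ sstar = 0 := by
  have hτ0 : (τ₁ : ℝ) ≠ 0 := ne_of_gt hτ₁
  have hτc : (τ₁ : ℂ) ≠ 0 := by exact_mod_cast hτ0
  have harg : -sstar * (τ₁ : ℂ) = ((τ₁ * a₀ + 1 : ℝ) : ℂ) := by
    rw [hs]; push_cast; field_simp; ring
  have hkey : (a₁ : ℂ) * Complex.exp (-sstar * (τ₁ : ℂ)) = -1 / (τ₁ : ℂ) := by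
    rw [harg, ← Complex.ofReal_exp, ← Complex.ofReal_mul]
    have : a₁ * Real.exp (τ₁ * a₀ + 1) = -1 / τ₁ := by
      rw [ha₁]
      field_simp
      have h : (-1 - τ₁ * a₀) + (τ₁ * a₀ + 1) = 0 := by ring
      rw [← Real.exp_add, h, Real.exp_zero]
    rw [this]; push_cast; ring
  have hfun : Δ = fun s => s + (a₀ : ℂ) - (a₁ : ℂ) * Complex.exp (-s * (τ₁ : ℂ)) :=
    funext hΔ
  have h1 : HasDerivAt (fun s : ℂ => -s * (τ₁ : ℂ)) (-(τ₁ : ℂ)) sstar := by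
    simpa using ((hasDerivAt_id sstar).neg.mul_const (τ₁ : ℂ))
  have hexp : HasDerivAt (fun s : ℂ => Complex.exp (-s * (τ₁ : ℂ)))
      (Complex.exp (-sstar * (τ₁ : ℂ)) * (-(τ₁ : ℂ))) sstar :=
    (Complex.hasDerivAt_exp _).comp sstar h1
  have hd : HasDerivAt Δ (1 - (a₁ : ℂ) * (Complex.exp (-sstar * (τ₁ : ℂ)) * (-(τ₁ : ℂ)))) sstar := by
    rw [hfun]
    exact ((hasDerivAt_id sstar).add_const _).sub ((hexp.const_mul _))
  constructor
  · rw [hΔ, hkey, hs]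
    push_cast
    field_simp
    ring
  · rw [hd.deriv]
    have : (a₁ : ℂ) * (Complex.exp (-sstar * (τ₁ : ℂ)) * (-(τ₁ : ℂ)))
        = ((a₁ : ℂ) * Complex.exp (-sstar * (τ₁ : ℂ))) * (-(τ₁ : ℂ)) := by ring
    rw [this, hkey]
    field_simp
    ring
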